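/- Suppose 0 ≤ m_1 < k. Then every element v of ker f_{k,m} ⊆ V_{k−1} has zero coefficient on every basis vector e_J with j_1 > m_1; i.e., elements of the kernel are supported on multiindices J with j_1 ≤ m_1. -/

import Mathlib

open Finsupp

/-- Multiindices `J : Fin n → ℕ` of total degree `j`. -/
abbrev MIdx (n j : ℕ) : Type := {J : Fin n → ℕ // ∑ i, J i = j}

/-- The complex vector space `V_j` with basis `{e_J : |J| = j}`. -/
abbrev V (n j : ℕ) : Type := MIdx n j →₀ ℂ

/-- `J + 1ᵢ` : the multiindex `J` with its `i`-th entry increased by 1. -/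
def incr {n : ℕ} (J : Fin n → ℕ) (i : Fin n) : Fin n → ℕ :=
  Function.update J i (J i + 1)

lemma sum_incr {n : ℕ} (J : Fin n → ℕ) (i : Fin n) :
    ∑ x, incr J i x = (∑ x, J x) + 1 := by
  unfold incr
  rw [Finset.sum_update_of_mem (Finset.mem_univ i),
    Finset.sum_eq_sum_sdiff_singleton_add (Finset.mem_univ i) J]
  ring

/-- The map `f_{j+1,m} : V_j → V_{j+1}`, `e_J ↦ ∑ᵢ (jᵢ+1)(mᵢ−jᵢ) e_{J+1ᵢ}`. -/
noncomputable def fMap (n : ℕ) (m : Fin n → ℕ) (j : ℕ) : V n j →ₗ[ℂ] V n (j + 1) :=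
  Finsupp.lift (V n (j + 1)) ℂ (MIdx n j) fun J =>
    ∑ i, (((J.1 i : ℂ) + 1) * ((m i : ℂ) - (J.1 i : ℂ))) •
      Finsupp.single (⟨incr J.1 i, by rw [sum_incr, J.2]⟩ : MIdx n (j + 1)) (1 : ℂ)

/-- `d(m,j)`: the number of multiindices `J` with `J i ≤ m i` for all `i` and `|J| = j`. -/
noncomputable def dCount (n : ℕ) (m : Fin n → ℕ) (j : ℤ) : ℕ :=
  Set.ncard {J : Fin n → ℕ | (∀ i, J i ≤ m i) ∧ ∑ i, (J i : ℤ) = j}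

/-- `w(m,j) = d(m,j) − d(m,j−1)`. -/
noncomputable def w (n : ℕ) (m : Fin n → ℕ) (j : ℤ) : ℤ :=
  (dCount n m j : ℤ) - (dCount n m (j - 1) : ℤ)

lemma fMap_apply {n j : ℕ} (m : Fin n → ℕ) (v : V n j) (K : MIdx n (j + 1)) :
    fMap n m j v K = ∑ J' ∈ v.support, v J' *
      ∑ i, (((J'.1 i : ℂ) + 1) * ((m i : ℂ) - (J'.1 i : ℂ))) *
        (if incr J'.1 i = K.1 then 1 else 0) := by
  rw [fMap, Finsupp.lift_apply, Finsupp.sum_apply, Finsupp.sum]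
  refine Finset.sum_congr rfl fun J' _ => ?_
  rw [Finsupp.smul_apply, smul_eq_mul]
  congr 1
  rw [Finsupp.finset_sum_apply]
  refine Finset.sum_congr rfl fun i _ => ?_
  rw [Finsupp.smul_apply, smul_eq_mul, Finsupp.single_apply]
  congr 1
  simp [Subtype.ext_iff]

/-- If `0 ≤ m_1 < k`, then every element of `ker f_{k,m} ⊆ V_{k−1}` has zero coefficient
on every basis vector `e_J` with `j_1 > m_1`. -/
theorem kernel_support_bounded (n k : ℕ) (hk : 1 ≤ k)
    (m : Fin (n + 1) → ℕ) (hm : m 0 < k)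
    (v : V (n + 1) (k - 1)) (hv : v ∈ LinearMap.ker (fMap (n + 1) m (k - 1)))
    (J : MIdx (n + 1) (k - 1)) (hJ : m 0 < J.1 0) :
    v J = 0 := by
  suffices H : ∀ d : ℕ, ∀ J : MIdx (n + 1) (k - 1),
      k - 1 - J.1 0 ≤ d → m 0 < J.1 0 → v J = 0 from H _ J le_rfl hJ
  intro d
  induction d using Nat.strong_induction_on with
  | _ d IH =>
    intro J hd hJ
    by_cases hsupp : J ∈ v.support
    swap
    · exact Finsupp.notMem_support_iff.mp hsupp
    have hJle : J.1 0 ≤ k - 1 := by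
      have h := Finset.single_le_sum (f := J.1) (fun i _ => Nat.zero_le _) (Finset.mem_univ 0)
      rw [J.2] at h; exact h
    set K : MIdx (n + 1) (k - 1 + 1) := ⟨incr J.1 0, by rw [sum_incr, J.2]⟩ with hKdef
    have h0 : (fMap (n + 1) m (k - 1) v) K = 0 := by
      rw [LinearMap.mem_ker.mp hv]; rfl
    rw [fMap_apply] at h0
    -- each summand simplifies
    have hbound : ∀ J' : MIdx (n + 1) (k - 1), J'.1 0 ≤ k - 1 := by
      intro J'
      have h := Finset.single_le_sum (f := J'.1) (fun i _ => Nat.zero_le _) (Finset.mem_univ 0)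
      rw [J'.2] at h; exact h
    have key : ∀ J' ∈ v.support, ∀ i : Fin (n + 1), i ≠ 0 → incr J'.1 i ≠ K.1 := by
      intro J' hJ' i hi hcontra
      -- then J'.1 0 = J.1 0 + 1
      have h1 : J'.1 0 = J.1 0 + 1 := by
        have := congrFun hcontra 0
        simpa [incr, Function.update_apply, Ne.symm hi, hKdef] using this
      have hJ0lt : J.1 0 < k - 1 := lt_of_lt_of_le (by omega) (hbound J')
      have hv0 : v J' = 0 := by
        refine IH (k - 1 - J'.1 0) ?_ J' le_rfl (by omega)
        omega
      exact Finsupp.mem_support_iff.mp hJ' hv0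
    have hsum : ∀ J' ∈ v.support,
        (v J' * ∑ i, (((J'.1 i : ℂ) + 1) * ((m i : ℂ) - (J'.1 i : ℂ))) *
          (if incr J'.1 i = K.1 then 1 else 0))
        = if J' = J then v J * (((J.1 0 : ℂ) + 1) * ((m 0 : ℂ) - (J.1 0 : ℂ))) else 0 := by
      intro J' hJ'
      by_cases hJJ : J' = J
      · subst hJJ
        rw [if_pos rfl]
        congr 1
        rw [Finset.sum_eq_single 0]
        · simp [hKdef]
        · intro i _ hi
          rw [if_neg (key J' hJ' i hi), mul_zero]
        · simp
      · rw [if_neg hJJ]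
        have : ∀ i ∈ Finset.univ, (((J'.1 i : ℂ) + 1) * ((m i : ℂ) - (J'.1 i : ℂ))) *
            (if incr J'.1 i = K.1 then 1 else 0) = 0 := by
          intro i _
          by_cases hi : i = 0
          · subst hi
            have : incr J'.1 0 ≠ K.1 := by
              intro hcontra
              apply hJJ
              apply Subtype.ext
              funext x
              have := congrFun hcontra x
              by_cases hx : x = 0
              · subst hx; simpa [incr, hKdef] using this
              · simpa [incr, Function.update_apply, hx, hKdef] using this
            rw [if_neg this, mul_zero]
          · rw [if_neg (key J' hJ' i hi), mul_zero]
        rw [Finset.sum_eq_zero this, mul_zero]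
    rw [Finset.sum_congr rfl hsum, Finset.sum_ite_eq' v.support J, if_pos hsupp] at h0
    have hne : (((J.1 0 : ℂ) + 1) * ((m 0 : ℂ) - (J.1 0 : ℂ))) ≠ 0 := by
      apply mul_ne_zero
      · exact Nat.cast_add_one_ne_zero (J.1 0)
      · rw [sub_ne_zero]
        exact_mod_cast Nat.ne_of_lt hJ
    exact (mul_eq_zero.mp h0).resolve_right hne
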